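/- Forward direction of Wall's theorem: If a : ℕ → ℝ is a Hausdorff moment sequence with a_0 = 1, then there exist real numbers g_1, g_2, g_3, ... all lying in [0,1] such that Σ_{n≥0} a_n t^n is represented, in the sense of formal power series, by the S-fraction with coefficients α_0 = 1, α_1 = g_1, and α_n = (1 − g_{n−1}) g_n for n ≥ 2. -/

import Mathlib

/- ===================  auxiliary development  =================== -/

noncomputable section
namespace WallAux
open Polynomial

/-- The moment functional attached to a sequence `b`. -/
def L (b : ℕ → ℝ) (p : Polynomial ℝ) : ℝ := p.sum fun n c => c * b n

lemma L_add (b : ℕ → ℝ) (p q : Polynomial ℝ) : L b (p + q) = L b p + L b q := by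
  unfold L
  apply Polynomial.sum_add_index <;> intros <;> ring

lemma L_monomial (b : ℕ → ℝ) (n : ℕ) (c : ℝ) : L b (monomial n c) = c * b n := by
  unfold L
  rw [Polynomial.sum_monomial_index]
  ring

lemma L_Cmul (b : ℕ → ℝ) (c : ℝ) (p : Polynomial ℝ) : L b (C c * p) = c * L b p := by
  induction p using Polynomial.induction_on' with
  | add p q hp hq => rw [mul_add, L_add, L_add, hp, hq]; ring
  | monomial n d => rw [C_mul_monomial, L_monomial, L_monomial]; ring

lemma L_sub (b : ℕ → ℝ) (p q : Polynomial ℝ) : L b (p - q) = L b p - L b q := by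
  have h : L b (q + (p - q)) = L b q + L b (p - q) := L_add b q (p - q)
  simp at h
  linarith

lemma L_one (b : ℕ → ℝ) : L b 1 = b 0 := by
  have : (1 : Polynomial ℝ) = monomial 0 1 := by simp
  rw [this, L_monomial]; ring

lemma L_Xpow (b : ℕ → ℝ) (n : ℕ) : L b (X ^ n) = b n := by
  rw [Polynomial.X_pow_eq_monomial, L_monomial]; ring

/-- degenerate Cauchy–Schwarz for the PSD form `(p,q) ↦ L b (W*p*q)` -/
lemma nullCS (b : ℕ → ℝ) (W : Polynomial ℝ) (hW : ∀ p, 0 ≤ L b (W * p * p))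
    (p q : Polynomial ℝ) (hp : L b (W * p * p) = 0) : L b (W * p * q) = 0 := by
  by_contra hne
  set A := L b (W * q * q) with hA
  set B := L b (W * p * q) with hB
  have key : ∀ t : ℝ, 0 ≤ A + 2 * t * B := by
    intro t
    have expand : W * (q + C t * p) * (q + C t * p)
        = W * q * q + C (2 * t) * (W * p * q) + C (t * t) * (W * p * p) := by
      have h2 : (C (2 * t) : Polynomial ℝ) = 2 * C t := by
        rw [C_mul, map_ofNat]
      have h3 : (C (t * t) : Polynomial ℝ) = C t * C t := by rw [C_mul]
      rw [h2, h3]; ring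
    have := hW (q + C t * p)
    rw [expand, L_add, L_add, L_Cmul, L_Cmul, hp] at this
    rw [mul_zero, add_zero] at this
    linarith
  have hkey := key (-(A + 1) / (2 * B))
  have hB0 : B ≠ 0 := hne
  have : A + 2 * (-(A + 1) / (2 * B)) * B = -1 := by field_simp; ring
  rw [this] at hkey
  linarith

/-- coefficients supported on degrees `≡ k (mod 2)` -/
def Par (k : ℕ) (p : Polynomial ℝ) : Prop := ∀ n, p.coeff n ≠ 0 → n % 2 = k % 2

lemma Par_mul {i j : ℕ} {p q : Polynomial ℝ} (hp : Par i p) (hq : Par j q) :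
    Par (i + j) (p * q) := by
  intro n hn
  rw [coeff_mul] at hn
  obtain ⟨⟨x, y⟩, hmem, hxy⟩ := Finset.exists_ne_zero_of_sum_ne_zero hn
  have hx := hp x (left_ne_zero_of_mul hxy)
  have hy := hq y (right_ne_zero_of_mul hxy)
  have hs : x + y = n := Finset.HasAntidiagonal.mem_antidiagonal.mp hmem
  omega

lemma Par_one : Par 0 (1 : Polynomial ℝ) := by
  intro n hn
  rcases eq_or_ne n 0 with rfl | h
  · rfl
  · simp [Polynomial.coeff_one, h] at hn

lemma Par_X : Par 1 (X : Polynomial ℝ) := by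
  intro n hn
  rcases eq_or_ne n 1 with rfl | h
  · rfl
  · simp [Polynomial.coeff_X, Ne.symm h] at hn

lemma Par_add {k : ℕ} {p q : Polynomial ℝ} (hp : Par k p) (hq : Par k q) : Par k (p + q) := by
  intro n hn
  rw [coeff_add] at hn
  by_cases h1 : p.coeff n = 0
  · exact hq n (by intro h2; rw [h1, h2] at hn; simp at hn)
  · exact hp n h1

lemma Par_Cmul {k : ℕ} (c : ℝ) {p : Polynomial ℝ} (hp : Par k p) : Par k (C c * p) := by
  intro n hn
  rw [coeff_C_mul] at hn
  exact hp n (right_ne_zero_of_mul hn)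

lemma Par_neg {k : ℕ} {p : Polynomial ℝ} (hp : Par k p) : Par k (-p) := by
  intro n hn
  rw [coeff_neg] at hn
  exact hp n (by simpa using hn)

lemma Par_Xmul {k : ℕ} {p : Polynomial ℝ} (hp : Par k p) : Par (k + 1) (X * p) := by
  have h := Par_mul Par_X hp
  intro n hn
  have := h n hn
  omega

lemma Par_congr_mod {k l : ℕ} (h : k % 2 = l % 2) {p : Polynomial ℝ} (hp : Par k p) : Par l p := by
  intro n hn
  rw [hp n hn]; exact h

lemma L_par_odd (b : ℕ → ℝ) (hbodd : ∀ m, b (2 * m + 1) = 0) (r : Polynomial ℝ)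
    (hr : Par 1 r) : L b r = 0 := by
  unfold L Polynomial.sum
  apply Finset.sum_eq_zero
  intro n hn
  have hc : r.coeff n ≠ 0 := Polynomial.mem_support_iff.mp hn
  have h1 : n % 2 = 1 := hr n hc
  have h2 : n = 2 * (n / 2) + 1 := by omega
  show r.coeff n * b n = 0
  have hb : b n = 0 := by rw [h2]; exact hbodd _
  rw [hb, mul_zero]

def Ev (p : Polynomial ℝ) : Polynomial ℝ := p.sum fun n c => if Even n then monomial (n / 2) c else 0
def Od (p : Polynomial ℝ) : Polynomial ℝ := p.sum fun n c => if Even n then 0 else monomial (n / 2) c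

lemma Ev_add (p q : Polynomial ℝ) : Ev (p + q) = Ev p + Ev q := by
  unfold Ev
  apply Polynomial.sum_add_index <;> intros <;> split <;> simp [map_add]

lemma Od_add (p q : Polynomial ℝ) : Od (p + q) = Od p + Od q := by
  unfold Od
  apply Polynomial.sum_add_index <;> intros <;> split <;> simp [map_add]

lemma Ev_monomial (n : ℕ) (c : ℝ) :
    Ev (monomial n c) = if Even n then monomial (n / 2) c else 0 := by
  unfold Ev
  rw [Polynomial.sum_monomial_index]
  split <;> simp

lemma Od_monomial (n : ℕ) (c : ℝ) :
    Od (monomial n c) = if Even n then 0 else monomial (n / 2) c := by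
  unfold Od
  rw [Polynomial.sum_monomial_index]
  split <;> simp

lemma X_mul_monomial' (k : ℕ) (a : ℝ) : X * monomial k a = monomial (k + 1) a := by
  rw [← monomial_one_one_eq_X, monomial_mul_monomial, one_mul, add_comm]

lemma Ev_mul (p q : Polynomial ℝ) : Ev (p * q) = Ev p * Ev q + X * (Od p * Od q) := by
  induction p using Polynomial.induction_on' with
  | add p1 p2 h1 h2 => rw [add_mul, Ev_add, h1, h2, Ev_add, Od_add]; ring
  | monomial m c =>
    induction q using Polynomial.induction_on' with
    | add q1 q2 h1 h2 => rw [mul_add, Ev_add, h1, h2, Ev_add, Od_add]; ring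
    | monomial n d =>
      rw [monomial_mul_monomial, Ev_monomial, Ev_monomial, Ev_monomial, Od_monomial,
        Od_monomial]
      rcases Nat.even_or_odd m with hm | hm <;> rcases Nat.even_or_odd n with hn | hn
      · obtain ⟨s, rfl⟩ := hm; obtain ⟨t, rfl⟩ := hn
        rw [if_pos (by rw [Nat.even_iff]; omega : Even (s + s + (t + t))), if_pos ⟨s, rfl⟩, if_pos ⟨t, rfl⟩,
          if_pos ⟨s, rfl⟩, if_pos ⟨t, rfl⟩, monomial_mul_monomial]
        have h : (s + s + (t + t)) / 2 = (s + s) / 2 + (t + t) / 2 := by omega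
        rw [h]; ring
      · obtain ⟨s, rfl⟩ := hm; obtain ⟨t, rfl⟩ := hn
        rw [if_neg (by rw [Nat.even_iff]; omega : ¬ Even (s + s + (2 * t + 1))), if_pos ⟨s, rfl⟩,
          if_neg (by rw [Nat.even_iff]; omega : ¬ Even (2 * t + 1)), if_pos ⟨s, rfl⟩,
          if_neg (by rw [Nat.even_iff]; omega : ¬ Even (2 * t + 1))]
        ring
      · obtain ⟨s, rfl⟩ := hm; obtain ⟨t, rfl⟩ := hn
        rw [if_neg (by rw [Nat.even_iff]; omega : ¬ Even (2 * s + 1 + (t + t))),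
          if_neg (by rw [Nat.even_iff]; omega : ¬ Even (2 * s + 1)), if_pos ⟨t, rfl⟩,
          if_neg (by rw [Nat.even_iff]; omega : ¬ Even (2 * s + 1)), if_pos ⟨t, rfl⟩]
        ring
      · obtain ⟨s, rfl⟩ := hm; obtain ⟨t, rfl⟩ := hn
        rw [if_pos (by rw [Nat.even_iff]; omega : Even (2 * s + 1 + (2 * t + 1))),
          if_neg (by rw [Nat.even_iff]; omega : ¬ Even (2 * s + 1)), if_neg (by rw [Nat.even_iff]; omega : ¬ Even (2 * t + 1)),
          if_neg (by rw [Nat.even_iff]; omega : ¬ Even (2 * s + 1)), if_neg (by rw [Nat.even_iff]; omega : ¬ Even (2 * t + 1)),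
          monomial_mul_monomial, X_mul_monomial']
        have h : (2 * s + 1 + (2 * t + 1)) / 2 = (2 * s + 1) / 2 + (2 * t + 1) / 2 + 1 := by omega
        rw [h]; ring

lemma Od_mul (p q : Polynomial ℝ) : Od (p * q) = Ev p * Od q + Od p * Ev q := by
  induction p using Polynomial.induction_on' with
  | add p1 p2 h1 h2 => rw [add_mul, Od_add, h1, h2, Ev_add, Od_add]; ring
  | monomial m c =>
    induction q using Polynomial.induction_on' with
    | add q1 q2 h1 h2 => rw [mul_add, Od_add, h1, h2, Ev_add, Od_add]; ring
    | monomial n d =>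
      rw [monomial_mul_monomial, Od_monomial, Ev_monomial, Od_monomial, Od_monomial,
        Ev_monomial]
      rcases Nat.even_or_odd m with hm | hm <;> rcases Nat.even_or_odd n with hn | hn
      · obtain ⟨s, rfl⟩ := hm; obtain ⟨t, rfl⟩ := hn
        rw [if_pos (by rw [Nat.even_iff]; omega : Even (s + s + (t + t))), if_pos ⟨s, rfl⟩, if_pos ⟨t, rfl⟩,
          if_pos ⟨s, rfl⟩, if_pos ⟨t, rfl⟩]
        ring
      · obtain ⟨s, rfl⟩ := hm; obtain ⟨t, rfl⟩ := hn
        rw [if_neg (by rw [Nat.even_iff]; omega : ¬ Even (s + s + (2 * t + 1))), if_pos ⟨s, rfl⟩,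
          if_neg (by rw [Nat.even_iff]; omega : ¬ Even (2 * t + 1)), if_pos ⟨s, rfl⟩,
          if_neg (by rw [Nat.even_iff]; omega : ¬ Even (2 * t + 1)), monomial_mul_monomial]
        have h : (s + s + (2 * t + 1)) / 2 = (s + s) / 2 + (2 * t + 1) / 2 := by omega
        rw [h]; ring
      · obtain ⟨s, rfl⟩ := hm; obtain ⟨t, rfl⟩ := hn
        rw [if_neg (by rw [Nat.even_iff]; omega : ¬ Even (2 * s + 1 + (t + t))),
          if_neg (by rw [Nat.even_iff]; omega : ¬ Even (2 * s + 1)), if_pos ⟨t, rfl⟩,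
          if_neg (by rw [Nat.even_iff]; omega : ¬ Even (2 * s + 1)), if_pos ⟨t, rfl⟩, monomial_mul_monomial]
        have h : (2 * s + 1 + (t + t)) / 2 = (2 * s + 1) / 2 + (t + t) / 2 := by omega
        rw [h]; ring
      · obtain ⟨s, rfl⟩ := hm; obtain ⟨t, rfl⟩ := hn
        rw [if_pos (by rw [Nat.even_iff]; omega : Even (2 * s + 1 + (2 * t + 1))),
          if_neg (by rw [Nat.even_iff]; omega : ¬ Even (2 * s + 1)), if_neg (by rw [Nat.even_iff]; omega : ¬ Even (2 * t + 1)),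
          if_neg (by rw [Nat.even_iff]; omega : ¬ Even (2 * s + 1)), if_neg (by rw [Nat.even_iff]; omega : ¬ Even (2 * t + 1))]
        ring

lemma Ev_Xmul (p : Polynomial ℝ) : Ev (X * p) = X * Od p := by
  induction p using Polynomial.induction_on' with
  | add p1 p2 h1 h2 => rw [mul_add, Ev_add, h1, h2, Od_add]; ring
  | monomial n c =>
    rw [X_mul_monomial', Ev_monomial, Od_monomial]
    rcases Nat.even_or_odd n with hn | hn
    · obtain ⟨s, rfl⟩ := hn
      rw [if_neg (by rw [Nat.even_iff]; omega : ¬ Even (s + s + 1)), if_pos ⟨s, rfl⟩, mul_zero]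
    · obtain ⟨s, rfl⟩ := hn
      rw [if_pos (by rw [Nat.even_iff]; omega : Even (2 * s + 1 + 1)), if_neg (by rw [Nat.even_iff]; omega : ¬ Even (2 * s + 1)),
        X_mul_monomial']
      have h : (2 * s + 1 + 1) / 2 = (2 * s + 1) / 2 + 1 := by omega
      rw [h]

section Meas
open MeasureTheory
variable (μ : Measure ℝ) [IsFiniteMeasure μ] (hsupp : μ (Set.Icc (0 : ℝ) 1)ᶜ = 0)

lemma ae_mem (hsupp : μ (Set.Icc (0 : ℝ) 1)ᶜ = 0) : ∀ᵐ x ∂μ, x ∈ Set.Icc (0 : ℝ) 1 := by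
  rw [MeasureTheory.ae_iff]
  simpa [Set.compl_def] using hsupp

lemma intPoly (hsupp : μ (Set.Icc (0 : ℝ) 1)ᶜ = 0) (r : Polynomial ℝ) :
    Integrable (fun x => r.eval x) μ := by
  obtain ⟨Cst, hC⟩ := (isCompact_Icc (a := (0:ℝ)) (b := 1)).exists_bound_of_continuousOn
    (r.continuous_aeval).continuousOn
  apply Integrable.mono' (integrable_const Cst)
  · exact r.continuous.aestronglyMeasurable
  · filter_upwards [ae_mem μ hsupp] with x hx
    simpa using hC x hx

variable (a : ℕ → ℝ) (hmom : ∀ n : ℕ, a n = ∫ x : ℝ, x ^ n ∂μ)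

/-- the symmetrized moment sequence -/
def bseq (a : ℕ → ℝ) : ℕ → ℝ := fun n => if Even n then a (n / 2) else 0

lemma Lint (hsupp : μ (Set.Icc (0 : ℝ) 1)ᶜ = 0) (hmom : ∀ n : ℕ, a n = ∫ x : ℝ, x ^ n ∂μ)
    (r : Polynomial ℝ) : L (bseq a) r = ∫ x, (Ev r).eval x ∂μ := by
  induction r using Polynomial.induction_on' with
  | add p q hp hq =>
    rw [L_add, Ev_add, hp, hq, ← integral_add (intPoly μ hsupp _) (intPoly μ hsupp _)]
    simp
  | monomial n c =>
    rw [L_monomial, Ev_monomial, bseq]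
    split
    · simp only [eval_monomial]
      rw [MeasureTheory.integral_const_mul, ← hmom]
    · simp
lemma HP1 (hsupp : μ (Set.Icc (0 : ℝ) 1)ᶜ = 0) (hmom : ∀ n : ℕ, a n = ∫ x : ℝ, x ^ n ∂μ)
    (p : Polynomial ℝ) : 0 ≤ L (bseq a) (p * p) := by
  rw [Lint μ a hsupp hmom]
  apply integral_nonneg_of_ae
  filter_upwards [ae_mem μ hsupp] with x hx
  rw [Ev_mul]
  simp only [eval_add, eval_mul, eval_X, Pi.zero_apply]
  nlinarith [sq_nonneg ((Ev p).eval x), sq_nonneg ((Od p).eval x), hx.1]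

lemma HP2 (hsupp : μ (Set.Icc (0 : ℝ) 1)ᶜ = 0) (hmom : ∀ n : ℕ, a n = ∫ x : ℝ, x ^ n ∂μ)
    (p : Polynomial ℝ) : 0 ≤ L (bseq a) ((1 - X) * p * p) := by
  have e2 : Ev ((1 - X) * p * p) = Ev (p * p) - Ev (X * (p * p)) := by
    have h := Ev_add ((1 - X) * p * p) (X * (p * p))
    rw [show (1 - X) * p * p + X * (p * p) = p * p by ring] at h
    exact eq_sub_of_add_eq h.symm
  rw [Lint μ a hsupp hmom, e2]
  apply integral_nonneg_of_ae
  filter_upwards [ae_mem μ hsupp] with x hx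
  rw [Ev_mul, Ev_Xmul, Od_mul]
  simp only [eval_sub, eval_add, eval_mul, eval_X, Pi.zero_apply]
  set E := (Ev p).eval x; set O := (Od p).eval x
  nlinarith [sq_nonneg (E - x * O),
    mul_nonneg (mul_nonneg hx.1 (by linarith [hx.2] : (0:ℝ) ≤ 1 - x)) (sq_nonneg O)]

end Meas
/-- orthogonal polynomial sequence -/
def phi (b : ℕ → ℝ) : ℕ → Polynomial ℝ
  | 0 => 1
  | 1 => X
  | (k + 2) => X * phi b (k + 1)
      - C (L b (phi b (k + 1) * phi b (k + 1)) / L b (phi b k * phi b k)) * phi b k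

def hseq (b : ℕ → ℝ) (k : ℕ) : ℝ := L b (phi b k * phi b k)

def gam (b : ℕ → ℝ) : ℕ → ℝ := fun k => if k = 0 then 0 else hseq b k / hseq b (k - 1)

lemma gam_succ (b : ℕ → ℝ) (k : ℕ) : gam b (k + 1) = hseq b (k + 1) / hseq b k := by
  simp [gam]

lemma phi_succ_succ (b : ℕ → ℝ) (k : ℕ) :
    phi b (k + 2) = X * phi b (k + 1) - C (gam b (k + 1)) * phi b k := by
  rw [gam_succ]; rfl

lemma recphi (b : ℕ → ℝ) (k : ℕ) :
    X * phi b k = phi b (k + 1) + C (gam b k) * phi b (k - 1) := by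
  match k with
  | 0 => simp [phi, gam]
  | (k + 1) =>
    show X * phi b (k + 1) = phi b (k + 2) + C (gam b (k + 1)) * phi b k
    rw [phi_succ_succ]; ring

lemma par_phi (b : ℕ → ℝ) : ∀ k, Par k (phi b k) := by
  intro k
  induction k using Nat.strong_induction_on with
  | _ k ih =>
    match k with
    | 0 => exact Par_one
    | 1 => exact Par_X
    | (k + 2) =>
      rw [phi_succ_succ, sub_eq_add_neg]
      apply Par_add
      · exact Par_Xmul (ih (k + 1) (by omega))
      · exact Par_neg (Par_Cmul _ (Par_congr_mod (by omega) (ih k (by omega))))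

lemma L_phi_xphi (b : ℕ → ℝ) (hbodd : ∀ m, b (2 * m + 1) = 0) (j k : ℕ)
    (hjk : (j + k) % 2 = 0) : L b (phi b j * (X * phi b k)) = 0 := by
  apply L_par_odd b hbodd
  have hp : (j + (k + 1)) % 2 = 1 % 2 := by omega
  exact Par_congr_mod hp (Par_mul (par_phi b j) (Par_Xmul (par_phi b k)))

section Core
variable (b : ℕ → ℝ) (HA1 : ∀ p, 0 ≤ L b (p * p)) (HA2 : ∀ p, 0 ≤ L b ((1 - X) * p * p))
  (Hodd : ∀ m, b (2 * m + 1) = 0) (Hb0 : b 0 = 1)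

include HA1 in
lemma nullL (p q : Polynomial ℝ) (hp : L b (p * p) = 0) : L b (p * q) = 0 := by
  have h := nullCS b 1 (fun r => by simpa [one_mul] using HA1 r) p q (by simpa [one_mul] using hp)
  simpa [one_mul] using h

include Hb0 in
lemma h0_eq : hseq b 0 = 1 := by
  unfold hseq
  rw [show phi b 0 = 1 from rfl, one_mul, L_one, Hb0]

include HA1 in
lemma h_nonneg (k : ℕ) : 0 ≤ hseq b k := HA1 _

include HA1 Hodd Hb0 in
lemma ortho : ∀ k j, j < k → L b (phi b j * phi b k) = 0 := by
  intro k
  induction k using Nat.strong_induction_on with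
  | _ k ih =>
    match k with
    | 0 => intro j hj; omega
    | 1 =>
      intro j hj
      have hj0 : j = 0 := by omega
      subst hj0
      have e : phi b 0 * phi b 1 = X ^ 1 := by
        show (1 : Polynomial ℝ) * X = X ^ 1
        ring
      rw [e, L_Xpow]
      simpa using Hodd 0
    | (m + 2) =>
      intro j hj
      have expand : L b (phi b j * phi b (m + 2))
          = L b (phi b j * (X * phi b (m + 1))) - gam b (m + 1) * L b (phi b j * phi b m) := by
        rw [phi_succ_succ, mul_sub, L_sub,
          show phi b j * (C (gam b (m + 1)) * phi b m)
            = C (gam b (m + 1)) * (phi b j * phi b m) by ring, L_Cmul]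
      -- inline: gam (m+1) * hseq m = hseq (m+1)
      have hgh : gam b (m + 1) * hseq b m = hseq b (m + 1) := by
        by_cases hm : hseq b m = 0
        · have hnull1 : hseq b (m + 1) = 0 := by
            clear expand hj j
            match m, hm with
            | 0, hm => exact absurd hm (by rw [h0_eq b Hb0]; norm_num)
            | (m' + 1), hm =>
              have e : phi b (m' + 2) * phi b (m' + 2)
                  = phi b (m' + 2) * (X * phi b (m' + 1))
                    - phi b (m' + 2) * (C (gam b (m' + 1)) * phi b m') := by
                nth_rewrite 2 [phi_succ_succ b m']
                ring
              have t1 : L b (phi b (m' + 2) * (X * phi b (m' + 1))) = 0 := by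
                rw [show phi b (m' + 2) * (X * phi b (m' + 1))
                  = phi b (m' + 1) * (X * phi b (m' + 2)) by ring]
                exact nullL b HA1 _ _ hm
              have t2 : L b (phi b (m' + 2) * (C (gam b (m' + 1)) * phi b m')) = 0 := by
                rw [show phi b (m' + 2) * (C (gam b (m' + 1)) * phi b m')
                  = C (gam b (m' + 1)) * (phi b m' * phi b (m' + 2)) by ring, L_Cmul,
                  ih (m' + 2) (by omega) m' (by omega), mul_zero]
              unfold hseq
              rw [e, L_sub, t1, t2, sub_zero]
          rw [hm, mul_zero, hnull1]
        · rw [gam_succ, div_mul_cancel₀ _ hm]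
      rcases Nat.lt_or_ge j m with hjm | hjm
      · -- j < m
        rw [expand]
        have e1 : L b (phi b j * (X * phi b (m + 1))) = 0 := by
          rw [show phi b j * (X * phi b (m + 1)) = (X * phi b j) * phi b (m + 1) by ring,
            recphi, add_mul,
            show C (gam b j) * phi b (j - 1) * phi b (m + 1)
              = C (gam b j) * (phi b (j - 1) * phi b (m + 1)) by ring,
            L_add, L_Cmul, ih (m + 1) (by omega) (j + 1) (by omega),
            ih (m + 1) (by omega) (j - 1) (by omega)]
          ring
        rw [e1, ih m (by omega) j hjm, mul_zero, sub_zero]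
      · rcases Nat.eq_or_lt_of_le hjm with hjeq | hjlt
        · -- j = m
          obtain rfl : j = m := hjeq.symm
          rw [expand]
          have e1 : L b (phi b j * (X * phi b (j + 1))) = hseq b (j + 1) := by
            rw [show phi b j * (X * phi b (j + 1)) = (X * phi b j) * phi b (j + 1) by ring,
              recphi, add_mul,
              show C (gam b j) * phi b (j - 1) * phi b (j + 1)
                = C (gam b j) * (phi b (j - 1) * phi b (j + 1)) by ring,
              L_add, L_Cmul, ih (j + 1) (by omega) (j - 1) (by omega)]
            unfold hseq; ring
          rw [e1, ← hgh]
          unfold hseq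
          ring
        · -- j = m + 1
          have hjeq : j = m + 1 := by omega
          subst hjeq
          rw [expand]
          have e1 : L b (phi b (m + 1) * (X * phi b (m + 1))) = 0 :=
            L_phi_xphi b Hodd (m + 1) (m + 1) (by omega)
          have e2 : L b (phi b (m + 1) * phi b m) = 0 := by
            rw [mul_comm]; exact ih (m + 1) (by omega) m (by omega)
          rw [e1, e2, mul_zero, sub_zero]

include HA1 Hodd Hb0 in
lemma hgammah (k : ℕ) : gam b (k + 1) * hseq b k = hseq b (k + 1) := by
  by_cases hm : hseq b k = 0
  · have hnull1 : hseq b (k + 1) = 0 := by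
      match k, hm with
      | 0, hm => exact absurd hm (by rw [h0_eq b Hb0]; norm_num)
      | (m' + 1), hm =>
        have e : phi b (m' + 2) * phi b (m' + 2)
            = phi b (m' + 2) * (X * phi b (m' + 1))
              - phi b (m' + 2) * (C (gam b (m' + 1)) * phi b m') := by
          nth_rewrite 2 [phi_succ_succ b m']
          ring
        have t1 : L b (phi b (m' + 2) * (X * phi b (m' + 1))) = 0 := by
          rw [show phi b (m' + 2) * (X * phi b (m' + 1))
            = phi b (m' + 1) * (X * phi b (m' + 2)) by ring]
          exact nullL b HA1 _ _ hm
        have t2 : L b (phi b (m' + 2) * (C (gam b (m' + 1)) * phi b m')) = 0 := by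
          rw [show phi b (m' + 2) * (C (gam b (m' + 1)) * phi b m')
            = C (gam b (m' + 1)) * (phi b m' * phi b (m' + 2)) by ring, L_Cmul,
            ortho b HA1 Hodd Hb0 (m' + 2) m' (by omega), mul_zero]
        unfold hseq
        rw [e, L_sub, t1, t2, sub_zero]
    rw [hm, mul_zero, hnull1]
  · rw [gam_succ, div_mul_cancel₀ _ hm]

include HA1 Hodd Hb0 in
lemma hnull (k : ℕ) (hk : hseq b k = 0) : hseq b (k + 1) = 0 := by
  rw [← hgammah b HA1 Hodd Hb0 k, hk, mul_zero]

end Core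

section Core
variable (b : ℕ → ℝ) (HA1 : ∀ p, 0 ≤ L b (p * p)) (HA2 : ∀ p, 0 ≤ L b ((1 - X) * p * p))
  (Hodd : ∀ m, b (2 * m + 1) = 0) (Hb0 : b 0 = 1)

def tauseq (b : ℕ → ℝ) : ℕ → ℝ
  | 0 => 1
  | (k + 1) => hseq b (k + 1) - (hseq b (k + 1)) ^ 2 / tauseq b k

def wpol (b : ℕ → ℝ) : ℕ → Polynomial ℝ
  | 0 => 1
  | (k + 1) => phi b (k + 1) + C (hseq b (k + 1) / tauseq b k) * wpol b k

include HA1 Hodd Hb0 in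
lemma wfacts : ∀ k : ℕ,
    L b ((1 - X) * wpol b k * wpol b k) = tauseq b k ∧
    (∀ m, k + 1 ≤ m → L b (phi b m * wpol b k) = 0) ∧
    (∀ m, k + 2 ≤ m → L b (phi b m * (X * wpol b k)) = 0) ∧
    L b (phi b (k + 1) * (X * wpol b k)) = gam b (k + 1) * hseq b k := by
  have ortho := ortho b HA1 Hodd Hb0
  have hgammah := hgammah b HA1 Hodd Hb0
  intro k
  induction k with
  | zero =>
    refine ⟨?_, ?_, ?_, ?_⟩
    · show L b ((1 - X) * 1 * 1) = 1
      rw [show ((1 - X) * 1 * 1 : Polynomial ℝ) = 1 - X ^ 1 by ring, L_sub, L_one, L_Xpow, Hb0]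
      have h := Hodd 0
      norm_num at h ⊢
      exact h
    · intro m hm
      show L b (phi b m * 1) = 0
      rw [mul_one]
      have h := ortho m 0 (by omega)
      rw [show phi b 0 = 1 from rfl, one_mul] at h
      exact h
    · intro m hm
      show L b (phi b m * (X * 1)) = 0
      rw [mul_one]
      have h := ortho m 1 (by omega)
      rw [show phi b 1 = X from rfl, mul_comm] at h
      exact h
    · show L b (phi b 1 * (X * 1)) = gam b 1 * hseq b 0
      rw [hgammah 0]
      show L b (phi b 1 * (X * 1)) = hseq b 1
      rw [mul_one]
      unfold hseq
      rw [show phi b 1 = X from rfl]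
  | succ k IH =>
    obtain ⟨A, B, Cc, D⟩ := IH
    set g' := hseq b (k + 1) / tauseq b k with hg'
    have wsucc : wpol b (k + 1) = phi b (k + 1) + C g' * wpol b k := rfl
    have T2 : L b ((1 - X) * phi b (k + 1) * wpol b k) = -(gam b (k + 1) * hseq b k) := by
      rw [show (1 - X) * phi b (k + 1) * wpol b k
        = phi b (k + 1) * wpol b k - phi b (k + 1) * (X * wpol b k) by ring, L_sub,
        B (k + 1) le_rfl, D]
      ring
    refine ⟨?_, ?_, ?_, ?_⟩
    · -- the tau computation
      have expand : (1 - X) * wpol b (k + 1) * wpol b (k + 1)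
          = (1 - X) * phi b (k + 1) * phi b (k + 1)
            + C (2 * g') * ((1 - X) * phi b (k + 1) * wpol b k)
            + C (g' * g') * ((1 - X) * wpol b k * wpol b k) := by
        rw [wsucc, map_mul, map_mul, map_ofNat]
        ring
      have T1 : L b ((1 - X) * phi b (k + 1) * phi b (k + 1)) = hseq b (k + 1) := by
        rw [show (1 - X) * phi b (k + 1) * phi b (k + 1)
          = phi b (k + 1) * phi b (k + 1) - phi b (k + 1) * (X * phi b (k + 1)) by ring,
          L_sub, L_phi_xphi b Hodd (k + 1) (k + 1) (by omega), sub_zero]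
        rfl
      rw [expand, L_add, L_add, L_Cmul, L_Cmul, T1, T2, A, hgammah k]
      show hseq b (k + 1) + 2 * g' * -hseq b (k + 1) + g' * g' * tauseq b k
          = tauseq b (k + 1)
      show hseq b (k + 1) + 2 * g' * -hseq b (k + 1) + g' * g' * tauseq b k
          = hseq b (k + 1) - (hseq b (k + 1)) ^ 2 / tauseq b k
      by_cases ht : tauseq b k = 0
      · rw [hg', ht, div_zero, div_zero]
        ring
      · rw [hg']
        field_simp
        ring
    · intro m hm
      rw [wsucc, mul_add, L_add,
        show phi b m * (C g' * wpol b k) = C g' * (phi b m * wpol b k) by ring, L_Cmul,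
        B m (by omega), mul_zero, add_zero, mul_comm, ortho m (k + 1) (by omega)]
    · intro m hm
      rw [wsucc, mul_add, mul_add, L_add,
        show phi b m * (X * (C g' * wpol b k)) = C g' * (phi b m * (X * wpol b k)) by ring,
        L_Cmul, Cc m (by omega), mul_zero, add_zero]
      have e1 : L b (phi b (m + 1) * phi b (k + 1)) = 0 := by
        rw [mul_comm]; exact ortho (m + 1) (k + 1) (by omega)
      have e2 : L b (phi b (m - 1) * phi b (k + 1)) = 0 := by
        rw [mul_comm]; exact ortho (m - 1) (k + 1) (by omega)
      rw [show phi b m * (X * phi b (k + 1)) = (X * phi b m) * phi b (k + 1) by ring,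
        recphi, add_mul,
        show C (gam b m) * phi b (m - 1) * phi b (k + 1)
          = C (gam b m) * (phi b (m - 1) * phi b (k + 1)) by ring, L_add, L_Cmul, e1, e2]
      ring
    · rw [wsucc, mul_add, mul_add, L_add,
        show phi b (k + 2) * (X * (C g' * wpol b k)) = C g' * (phi b (k + 2) * (X * wpol b k))
          by ring, L_Cmul, Cc (k + 2) le_rfl, mul_zero, add_zero]
      have e2 : L b (phi b k * phi b (k + 2)) = 0 := ortho (k + 2) k (by omega)
      rw [show phi b (k + 2) * (X * phi b (k + 1)) = (X * phi b (k + 1)) * phi b (k + 2) by ring,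
        recphi, add_mul,
        show C (gam b (k + 1)) * phi b (k + 1 - 1) * phi b (k + 2)
          = C (gam b (k + 1)) * (phi b (k + 1 - 1) * phi b (k + 2)) by ring, L_add, L_Cmul]
      rw [show k + 1 - 1 = k from rfl, e2, mul_zero, add_zero, hgammah (k + 1)]
      rfl

include HA1 HA2 Hodd Hb0 in
lemma tau_nonneg (k : ℕ) : 0 ≤ tauseq b k := by
  rw [← (wfacts b HA1 Hodd Hb0 k).1]
  exact HA2 _

include HA1 HA2 Hodd Hb0 in
lemma tau_align (k : ℕ) (ht : tauseq b k = 0) : hseq b (k + 1) = 0 := by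
  obtain ⟨A, B, Cc, D⟩ := wfacts b HA1 Hodd Hb0 k
  have h1 : L b ((1 - X) * wpol b k * wpol b k) = 0 := by rw [A, ht]
  have h2 := nullCS b (1 - X) HA2 (wpol b k) (phi b (k + 1)) h1
  have T2 : L b ((1 - X) * phi b (k + 1) * wpol b k) = -(gam b (k + 1) * hseq b k) := by
    rw [show (1 - X) * phi b (k + 1) * wpol b k
      = phi b (k + 1) * wpol b k - phi b (k + 1) * (X * wpol b k) by ring, L_sub,
      B (k + 1) le_rfl, D]
    ring
  rw [show (1 - X) * wpol b k * phi b (k + 1) = (1 - X) * phi b (k + 1) * wpol b k by ring,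
    T2] at h2
  rw [← hgammah b HA1 Hodd Hb0 k]
  linarith

/-- the Wall parameter sequence -/
def gseq (b : ℕ → ℝ) (n : ℕ) : ℝ := hseq b n / tauseq b (n - 1)

lemma tau_eq_succ (k : ℕ) : tauseq b (k + 1) = hseq b (k + 1) * (1 - gseq b (k + 1)) := by
  show hseq b (k + 1) - (hseq b (k + 1)) ^ 2 / tauseq b k = _
  rw [gseq, show k + 1 - 1 = k from rfl]
  ring

include HA1 HA2 Hodd Hb0 in
lemma g_nonneg (n : ℕ) : 0 ≤ gseq b n :=
  div_nonneg (HA1 _) (tau_nonneg b HA1 HA2 Hodd Hb0 _)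

include HA1 HA2 Hodd Hb0 in
lemma g_le_one (n : ℕ) (hn : 1 ≤ n) : gseq b n ≤ 1 := by
  obtain ⟨j, rfl⟩ := Nat.exists_eq_add_of_le hn
  rw [add_comm]
  by_cases ht : tauseq b j = 0
  · rw [gseq, show j + 1 - 1 = j from rfl, ht, div_zero]
    norm_num
  · by_cases hh : hseq b (j + 1) = 0
    · rw [gseq, show j + 1 - 1 = j from rfl, hh, zero_div]
      norm_num
    · have h1 : 0 < hseq b (j + 1) := lt_of_le_of_ne (HA1 _) (Ne.symm hh)
      have h2 := tau_nonneg b HA1 HA2 Hodd Hb0 (j + 1)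
      rw [tau_eq_succ] at h2
      nlinarith
lemma gseq_succ (k : ℕ) : gseq b (k + 1) = hseq b (k + 1) / tauseq b k := by
  rw [gseq, Nat.add_sub_cancel]

include Hb0 in
lemma gam_one_eq : gam b 1 = gseq b 1 := by
  have h0 : hseq b 0 = 1 := by
    show L b (phi b 0 * phi b 0) = 1
    rw [show phi b 0 * phi b 0 = 1 by rw [show phi b 0 = 1 from rfl]; ring, L_one, Hb0]
  have e1 : gam b 1 = hseq b 1 / hseq b 0 := gam_succ b 0
  have e2 : gseq b 1 = hseq b 1 / tauseq b 0 := gseq_succ b 0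
  rw [e1, e2, h0, show tauseq b 0 = 1 from rfl]

include HA1 HA2 Hodd Hb0 in
lemma chain (k : ℕ) : gam b (k + 1 + 1) = (1 - gseq b (k + 1)) * gseq b (k + 1 + 1) := by
  by_cases ht : tauseq b (k + 1) = 0
  · have hh : hseq b (k + 1 + 1) = 0 := tau_align b HA1 HA2 Hodd Hb0 (k + 1) ht
    rw [gam_succ, gseq_succ b (k + 1), hh, zero_div, zero_div, mul_zero]
  · have hfac : hseq b (k + 1) * (1 - gseq b (k + 1)) ≠ 0 := by
      rw [← tau_eq_succ]; exact ht
    have h1 : hseq b (k + 1) ≠ 0 := left_ne_zero_of_mul hfac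
    have h2 : 1 - gseq b (k + 1) ≠ 0 := right_ne_zero_of_mul hfac
    rw [gam_succ, gseq_succ b (k + 1), tau_eq_succ b k]
    field_simp
end Core
/-- coefficients of the continued-fraction tails -/
def cf (gs : ℕ → ℝ) : ℕ → ℕ → ℝ
  | 0, _ => 1
  | (n + 1), k => gs (k + 1) * ∑ i ∈ (Finset.range (n + 1)).attach,
      cf gs i.1 (k + 1) * cf gs (n - i.1) k
termination_by n k => n
decreasing_by
  · exact Finset.mem_range.mp i.2
  · have := Finset.mem_range.mp i.2; omega

lemma cf_zero (gs : ℕ → ℝ) (k : ℕ) : cf gs 0 k = 1 := by simp [cf]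

lemma cf_succ (gs : ℕ → ℝ) (n k : ℕ) : cf gs (n + 1) k
    = gs (k + 1) * ∑ i ∈ Finset.range (n + 1), cf gs i (k + 1) * cf gs (n - i) k := by
  simp only [cf]
  congr 1
  exact Finset.sum_attach (Finset.range (n + 1)) (fun i => cf gs i (k + 1) * cf gs (n - i) k)

def Fser (gs : ℕ → ℝ) (k : ℕ) : PowerSeries ℝ := PowerSeries.mk fun n => cf gs n k

lemma Feq (gs : ℕ → ℝ) (k : ℕ) :
    Fser gs k * (1 - PowerSeries.C (gs (k + 1)) * PowerSeries.X * Fser gs (k + 1)) = 1 := by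
  have key : Fser gs k
      = 1 + PowerSeries.C (gs (k + 1)) * PowerSeries.X * (Fser gs (k + 1) * Fser gs k) := by
    ext n
    rcases n with _ | n
    · simp [Fser, cf_zero, mul_assoc, PowerSeries.coeff_zero_X_mul]
    · rw [map_add, mul_assoc, PowerSeries.coeff_C_mul, PowerSeries.coeff_succ_X_mul]
      rw [show ((PowerSeries.coeff (n+1)) (1 : PowerSeries ℝ)) = 0 by
        rw [PowerSeries.coeff_one]; simp]
      rw [PowerSeries.coeff_mul, Finset.Nat.sum_antidiagonal_eq_sum_range_succ_mk]
      simp only [Fser, PowerSeries.coeff_mk]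
      rw [cf_succ]
      ring
  linear_combination key

/-- the transfer coefficients: `X^m = ∑_j psi m j • φ_j` -/
def psi (gs : ℕ → ℝ) : ℕ → ℕ → ℝ
  | 0, j => if j = 0 then 1 else 0
  | (m + 1), j => (if j = 0 then 0 else psi gs m (j - 1)) + gs (j + 1) * psi gs m (j + 1)

/-- the even "spread" of the tail series -/
def Gser (gs : ℕ → ℝ) (i : ℕ) : PowerSeries ℝ :=
  PowerSeries.mk fun m => if Even m then cf gs (m / 2) i else 0

lemma conv_even (e f : ℕ → ℝ) (n : ℕ) :
    (∑ x ∈ Finset.HasAntidiagonal.antidiagonal n,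
      (if Even x.1 then e (x.1 / 2) else 0) * (if Even x.2 then f (x.2 / 2) else 0))
    = if Even n then ∑ x ∈ Finset.HasAntidiagonal.antidiagonal (n / 2), e x.1 * f x.2 else 0 := by
  rw [Finset.Nat.sum_antidiagonal_eq_sum_range_succ_mk]
  by_cases hn : Even n
  · rw [if_pos hn]
    rw [Finset.Nat.sum_antidiagonal_eq_sum_range_succ_mk]
    obtain ⟨p, rfl⟩ := hn
    have himg : ∑ k ∈ Finset.range (p + p + 1),
        (if Even k then e (k / 2) else 0) * (if Even (p + p - k) then f ((p + p - k) / 2) else 0)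
        = ∑ k ∈ (Finset.range (p + 1)).image (fun i => 2 * i),
        (if Even k then e (k / 2) else 0) * (if Even (p + p - k) then f ((p + p - k) / 2) else 0) := by
      symm
      apply Finset.sum_subset
      · intro x hx
        obtain ⟨i, hi, rfl⟩ := Finset.mem_image.mp hx
        have := Finset.mem_range.mp hi
        exact Finset.mem_range.mpr (by omega)
      · intro x hx hnx
        have hodd : ¬ Even x := by
          intro hev
          obtain ⟨i, rfl⟩ := hev
          apply hnx
          apply Finset.mem_image.mpr
          refine ⟨i, Finset.mem_range.mpr ?_, by omega⟩
          have := Finset.mem_range.mp hx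
          omega
        rw [if_neg hodd, zero_mul]
    rw [himg, Finset.sum_image (by intro a _ b _ h; simp only at h; omega),
      show (p + p) / 2 = p by omega, Nat.succ_eq_add_one]
    apply Finset.sum_congr rfl
    intro i hi
    have hi' := Finset.mem_range.mp hi
    rw [if_pos (show Even (2 * i) from ⟨i, by omega⟩), if_pos (by rw [Nat.even_iff]; omega : Even (p + p - 2 * i))]
    have e1 : 2 * i / 2 = i := by omega
    have e2 : (p + p - 2 * i) / 2 = p - i := by omega
    rw [e1, e2]
  · rw [if_neg hn]
    apply Finset.sum_eq_zero
    intro k hk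
    have hk' := Finset.mem_range.mp hk
    by_cases hke : Even k
    · rw [if_neg (by rw [Nat.even_iff] at *; omega : ¬ Even (n - k)), mul_zero]
    · rw [if_neg hke, zero_mul]

lemma Grenew (gs : ℕ → ℝ) (j : ℕ) :
    Gser gs j = 1 + PowerSeries.C (gs (j + 1)) * (PowerSeries.X * (PowerSeries.X *
      (Gser gs (j + 1) * Gser gs j))) := by
  ext n
  rcases n with _ | n
  · simp [Gser, PowerSeries.coeff_zero_X_mul, cf_zero]
  rcases n with _ | n
  · rw [map_add, PowerSeries.coeff_C_mul, PowerSeries.coeff_succ_X_mul,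
      PowerSeries.coeff_zero_X_mul, PowerSeries.coeff_one]
    simp only [Gser, PowerSeries.coeff_mk]
    rw [if_neg (by decide : ¬ Even 1)]
    norm_num
  · rw [map_add, PowerSeries.coeff_C_mul, PowerSeries.coeff_succ_X_mul,
      PowerSeries.coeff_succ_X_mul, PowerSeries.coeff_one,
      if_neg (by omega : ¬ (n + 1 + 1 = 0)), PowerSeries.coeff_mul]
    simp only [Gser, PowerSeries.coeff_mk]
    rw [conv_even (fun t => cf gs t (j + 1)) (fun t => cf gs t j) n]
    by_cases hn : Even n
    · rw [if_pos hn, if_pos (show Even (n + 1 + 1) by rw [Nat.even_iff] at hn ⊢; omega)]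
      have e1 : (n + 1 + 1) / 2 = n / 2 + 1 := by omega
      rw [e1, cf_succ, Finset.Nat.sum_antidiagonal_eq_sum_range_succ_mk]
      ring
    · rw [if_neg hn, if_neg (show ¬ Even (n + 1 + 1) by rw [Nat.even_iff] at hn ⊢; omega),
        zero_add, mul_zero]

def chi (gs : ℕ → ℝ) (m j : ℕ) : ℝ :=
  PowerSeries.coeff m ((PowerSeries.X : PowerSeries ℝ) ^ j
    * ∏ i ∈ Finset.range (j + 1), Gser gs i)

lemma psi_eq_chi (gs : ℕ → ℝ) : ∀ m j, psi gs m j = chi gs m j := by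
  intro m
  induction m with
  | zero =>
    intro j
    rcases j with _ | j
    · show (1 : ℝ) = _
      unfold chi
      rw [pow_zero, one_mul, Finset.prod_range_one]
      simp [Gser, cf_zero]
    · show (0 : ℝ) = _
      unfold chi
      rw [pow_succ, show (PowerSeries.X : PowerSeries ℝ) ^ j * PowerSeries.X
          * ∏ i ∈ Finset.range (j + 1 + 1), Gser gs i
        = PowerSeries.X * ((PowerSeries.X : PowerSeries ℝ) ^ j
          * ∏ i ∈ Finset.range (j + 1 + 1), Gser gs i) by ring,
        PowerSeries.coeff_zero_X_mul]
  | succ m ih =>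
    intro j
    have key : (PowerSeries.X : PowerSeries ℝ) ^ j * ∏ i ∈ Finset.range (j + 1), Gser gs i
        = (PowerSeries.X : PowerSeries ℝ) ^ j * ∏ i ∈ Finset.range j, Gser gs i
          + PowerSeries.C (gs (j + 1)) * ((PowerSeries.X : PowerSeries ℝ) ^ (j + 2)
            * ∏ i ∈ Finset.range (j + 2), Gser gs i) := by
      rw [Finset.prod_range_succ, Finset.prod_range_succ, Finset.prod_range_succ]
      nth_rewrite 1 [Grenew gs j]
      ring
    unfold chi
    rw [key, map_add]
    have t2 : PowerSeries.coeff (m + 1) (PowerSeries.C (gs (j + 1))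
        * ((PowerSeries.X : PowerSeries ℝ) ^ (j + 2) * ∏ i ∈ Finset.range (j + 2), Gser gs i))
        = gs (j + 1) * chi gs m (j + 1) := by
      rw [PowerSeries.coeff_C_mul]
      congr 1
      rw [show (PowerSeries.X : PowerSeries ℝ) ^ (j + 2)
          * ∏ i ∈ Finset.range (j + 2), Gser gs i
        = PowerSeries.X * ((PowerSeries.X : PowerSeries ℝ) ^ (j + 1)
          * ∏ i ∈ Finset.range (j + 2), Gser gs i) by rw [pow_succ]; ring,
        PowerSeries.coeff_succ_X_mul]
      rfl
    rcases j with _ | j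
    · rw [t2]
      show psi gs (m + 1) 0 = _
      rw [show psi gs (m + 1) 0 = gs 1 * psi gs m 1 by rw [psi]; simp]
      rw [pow_zero, one_mul, show (Finset.range 0) = ∅ from rfl, Finset.prod_empty,
        show PowerSeries.coeff (m + 1) (1 : PowerSeries ℝ) = 0 by
          rw [PowerSeries.coeff_one]; simp,
        zero_add, ih 1]
    · have t1 : PowerSeries.coeff (m + 1) ((PowerSeries.X : PowerSeries ℝ) ^ (j + 1)
          * ∏ i ∈ Finset.range (j + 1), Gser gs i) = chi gs m j := by
        rw [show (PowerSeries.X : PowerSeries ℝ) ^ (j + 1)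
            * ∏ i ∈ Finset.range (j + 1), Gser gs i
          = PowerSeries.X * ((PowerSeries.X : PowerSeries ℝ) ^ j
            * ∏ i ∈ Finset.range (j + 1), Gser gs i) by rw [pow_succ]; ring,
          PowerSeries.coeff_succ_X_mul]
        rfl
      rw [t1, t2]
      show psi gs (m + 1) (j + 1) = _
      rw [show psi gs (m + 1) (j + 1)
        = psi gs m j + gs (j + 2) * psi gs m (j + 2) by rw [psi]; simp]
      rw [ih j, ih (j + 2)]

section Core2
variable (b : ℕ → ℝ) (HA1 : ∀ p, 0 ≤ L b (p * p)) (HA2 : ∀ p, 0 ≤ L b ((1 - X) * p * p))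
  (Hodd : ∀ m, b (2 * m + 1) = 0) (Hb0 : b 0 = 1)

include HA1 Hodd Hb0 in
lemma psiMom : ∀ m j, L b (X ^ m * phi b j) = psi (gam b) m j * hseq b j := by
  intro m
  induction m with
  | zero =>
    intro j
    rcases j with _ | j
    · rw [pow_zero, one_mul, show phi b 0 = 1 from rfl, L_one, Hb0,
        show psi (gam b) 0 0 = 1 by simp [psi], h0_eq b Hb0]
      norm_num
    · rw [pow_zero, one_mul, show psi (gam b) 0 (j + 1) = 0 by rw [psi]; simp, zero_mul]
      have h := ortho b HA1 Hodd Hb0 (j + 1) 0 (by omega)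
      rw [show phi b 0 = 1 from rfl, one_mul] at h
      exact h
  | succ m ih =>
    intro j
    have e0 : X ^ (m + 1) * phi b j = X ^ m * (X * phi b j) := by ring
    rw [e0, recphi b j, mul_add, L_add,
      show X ^ m * (C (gam b j) * phi b (j - 1)) = C (gam b j) * (X ^ m * phi b (j - 1)) by ring,
      L_Cmul, ih (j + 1), ih (j - 1),
      show psi (gam b) (m + 1) j
        = (if j = 0 then 0 else psi (gam b) m (j - 1)) + gam b (j + 1) * psi (gam b) m (j + 1)
        by rw [psi]]
    rcases j with _ | j
    · rw [if_pos rfl, show gam b 0 = 0 by simp [gam], ← hgammah b HA1 Hodd Hb0 0]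
      ring
    · rw [if_neg (by omega), ← hgammah b HA1 Hodd Hb0 (j + 1), ← hgammah b HA1 Hodd Hb0 j,
        Nat.add_sub_cancel]
      ring
end Core2

end WallAux
end

open MeasureTheory PowerSeries

/-- A formal power series `f ∈ ℝ⟦t⟧` is represented by the S-fraction with
coefficients `α`. -/
def IsSFractionOf (α : ℕ → ℝ) (f : PowerSeries ℝ) : Prop :=
  ∃ F : ℕ → PowerSeries ℝ,
    (∀ k, F k * (1 - PowerSeries.C (α (k + 1)) * PowerSeries.X * F (k + 1)) = 1) ∧
    f = PowerSeries.C (α 0) * F 0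

/-- `a` is a Hausdorff moment sequence. -/
def IsHausdorffMomentSeq (a : ℕ → ℝ) : Prop :=
  ∃ μ : Measure ℝ, IsFiniteMeasure μ ∧ μ (Set.Icc (0 : ℝ) 1)ᶜ = 0 ∧
    ∀ n : ℕ, a n = ∫ x : ℝ, x ^ n ∂μ

/-- The Wall coefficients: `α_0 = c`, `α_1 = g_1`, `α_n = (1 - g_{n-1}) g_n` for `n ≥ 2`. -/
def wallAlpha (c : ℝ) (g : ℕ → ℝ) : ℕ → ℝ := fun n =>
  if n = 0 then c else if n = 1 then g 1 else (1 - g (n - 1)) * g n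

/-- Forward direction of Wall's theorem: a Hausdorff moment sequence with `a_0 = 1`
has an S-fraction representation with coefficients `α_0 = 1`, `α_1 = g_1`,
`α_n = (1 - g_{n-1}) g_n` where all `g_n ∈ [0,1]`. -/
theorem wall_forward (a : ℕ → ℝ) (ha : IsHausdorffMomentSeq a) (ha0 : a 0 = 1) :
    ∃ g : ℕ → ℝ, (∀ n, 1 ≤ n → g n ∈ Set.Icc (0 : ℝ) 1) ∧
      IsSFractionOf (wallAlpha 1 g) (PowerSeries.mk a) := by
  classical
  obtain ⟨μ, hfin, hsupp, hmom⟩ := ha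
  haveI := hfin
  set b : ℕ → ℝ := WallAux.bseq a with hb
  have Hodd : ∀ m, b (2 * m + 1) = 0 := by
    intro m
    rw [hb]
    unfold WallAux.bseq
    rw [if_neg (by rw [Nat.even_iff]; omega)]
  have Hb0 : b 0 = 1 := by
    rw [hb]
    unfold WallAux.bseq
    rw [if_pos (by decide), show (0:ℕ)/2 = 0 from rfl, ha0]
  have HA1 : ∀ p, 0 ≤ WallAux.L b (p * p) := fun p => WallAux.HP1 μ a hsupp hmom p
  have HA2 : ∀ p, 0 ≤ WallAux.L b ((1 - Polynomial.X) * p * p) :=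
    fun p => WallAux.HP2 μ a hsupp hmom p
  refine ⟨WallAux.gseq b, ?_, ?_⟩
  · intro n hn
    exact ⟨WallAux.g_nonneg b HA1 HA2 Hodd Hb0 n, WallAux.g_le_one b HA1 HA2 Hodd Hb0 n hn⟩
  · refine ⟨WallAux.Fser (WallAux.gam b), ?_, ?_⟩
    · intro k
      have halpha : wallAlpha 1 (WallAux.gseq b) (k + 1) = WallAux.gam b (k + 1) := by
        rcases k with _ | k
        · rw [show wallAlpha 1 (WallAux.gseq b) 1 = WallAux.gseq b 1 by simp [wallAlpha]]
          exact (WallAux.gam_one_eq b Hb0).symm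
        · rw [show wallAlpha 1 (WallAux.gseq b) (k + 1 + 1)
            = (1 - WallAux.gseq b (k + 1)) * WallAux.gseq b (k + 1 + 1) by
              simp [wallAlpha]]
          exact (WallAux.chain b HA1 HA2 Hodd Hb0 k).symm
      rw [halpha]
      exact WallAux.Feq (WallAux.gam b) k
    · rw [show wallAlpha 1 (WallAux.gseq b) 0 = 1 from rfl, map_one, one_mul]
      ext n
      rw [PowerSeries.coeff_mk]
      have h5 : (PowerSeries.coeff n) (WallAux.Fser (WallAux.gam b) 0)
          = WallAux.cf (WallAux.gam b) n 0 := by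
        unfold WallAux.Fser
        rw [PowerSeries.coeff_mk]
      rw [h5]
      have h1 : a n = b (2 * n) := by
        rw [hb]
        unfold WallAux.bseq
        rw [if_pos ⟨n, by omega⟩, show 2 * n / 2 = n by omega]
      have h2 : b (2 * n) = WallAux.psi (WallAux.gam b) (2 * n) 0 := by
        have h := WallAux.psiMom b HA1 Hodd Hb0 (2 * n) 0
        rw [show WallAux.phi b 0 = 1 from rfl, mul_one, WallAux.L_Xpow,
          WallAux.h0_eq b Hb0, mul_one] at h
        exact h
      have h3 : WallAux.psi (WallAux.gam b) (2 * n) 0 = WallAux.chi (WallAux.gam b) (2 * n) 0 :=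
        WallAux.psi_eq_chi _ _ _
      have h4 : WallAux.chi (WallAux.gam b) (2 * n) 0 = WallAux.cf (WallAux.gam b) n 0 := by
        unfold WallAux.chi
        rw [pow_zero, one_mul, Finset.prod_range_one]
        unfold WallAux.Gser
        rw [PowerSeries.coeff_mk, if_pos ⟨n, by omega⟩, show 2 * n / 2 = n by omega]
      rw [h1, h2, h3, h4]
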